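/- arXiv:1610.00111 — 2 statements merged into one kernel-verified Lean document; each statement's English description precedes it below -/
import Mathlib

section
/- Let (𝓐_λ)_{λ∈Λ} be a net of von Neumann algebras on a complex Hilbert space H and 𝓐 a von Neumann algebra on H equal to the strong*-liminf of (𝓐_λ). If (L_μ)_{μ∈Λ₀} is a subnet with each L_μ an orthogonal projection belonging to the commutant 𝓐_μ′, and L_μ converges in the weak operator topology to an operator A, then A belongs to the commutant 𝓐′ and satisfies 0 ≤ A ≤ I. -/
open Filter

noncomputable section

variable {H : Type*} [NormedAddCommGroup H] [InnerProductSpace ℂ H] [CompleteSpace H]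

/-- An orthogonal projection: a self-adjoint idempotent bounded operator. -/
def IsOrthoProj (L : H →L[ℂ] H) : Prop := IsSelfAdjoint L ∧ L * L = L

/-- The weak operator topology on `B(H)`. -/
def WOT (H : Type*) [NormedAddCommGroup H] [InnerProductSpace ℂ H] :
    TopologicalSpace (H →L[ℂ] H) :=
  TopologicalSpace.induced
    (fun T : H →L[ℂ] H => fun p : H × H => (inner ℂ (T p.1) p.2 : ℂ)) inferInstance

/-- strong-* liminf of a net of sets of operators. -/
def sstarLiminf {Λ : Type*} [Preorder Λ] (F : Λ → Set (H →L[ℂ] H)) :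
    Set (H →L[ℂ] H) :=
  {A | ∃ T : Λ → H →L[ℂ] H, (∀ l, T l ∈ F l) ∧
      (∀ x : H, Tendsto (fun l => T l x) atTop (nhds (A x))) ∧
      (∀ x : H, Tendsto (fun l => ContinuousLinearMap.adjoint (T l) x) atTop
        (nhds (ContinuousLinearMap.adjoint A x)))}

/-- Helper: if `g → a` and `‖h - g‖` is eventually bounded by `c → 0`, then `h → a`. -/
lemma tendsto_of_close {α : Type*} {f : Filter α} {g h : α → ℂ} {a : ℂ} {c : α → ℝ}
    (hg : Tendsto g f (nhds a) ) (hb : ∀ᶠ l in f, ‖h l - g l‖ ≤ c l)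
    (hc : Tendsto c f (nhds 0)) : Tendsto h f (nhds a) := by
  have h0 : Tendsto (fun l => h l - g l) f (nhds 0) := squeeze_zero_norm' hb hc
  have := h0.add hg
  simpa using this

/-- Helper: norm bound for orthogonal projections. -/
lemma IsOrthoProj.inner_self_eq {L : H →L[ℂ] H} (hL : IsOrthoProj L) (x : H) :
    (inner ℂ (L x) x : ℂ) = (‖L x‖ ^ 2 : ℝ) := by
  obtain ⟨hsa, hid⟩ := hL
  have hsym := (ContinuousLinearMap.isSelfAdjoint_iff_isSymmetric.mp hsa)
  have h1 : (inner ℂ (L (L x)) x : ℂ) = inner ℂ (L x) (L x) := hsym (L x) x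
  have h2 : L (L x) = L x := by
    have := congrArg (fun S : H →L[ℂ] H => S x) hid
    simpa using this
  rw [h2] at h1
  rw [h1, inner_self_eq_norm_sq_to_K]
  norm_cast

lemma IsOrthoProj.norm_apply_le {L : H →L[ℂ] H} (hL : IsOrthoProj L) (x : H) :
    ‖L x‖ ≤ ‖x‖ := by
  have h := hL.inner_self_eq x
  have hre : (‖L x‖ ^ 2 : ℝ) = Complex.re (inner ℂ (L x) x : ℂ) := by
    rw [h, Complex.ofReal_re]
  have hcs : Complex.re (inner ℂ (L x) x : ℂ) ≤ ‖L x‖ * ‖x‖ :=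
    le_trans (Complex.re_le_norm _) (by simpa using norm_inner_le_norm (𝕜 := ℂ) (L x) x)
  rcases eq_or_lt_of_le (norm_nonneg (L x)) with h0 | h0
  · rw [← h0]; exact norm_nonneg x
  · nlinarith [hre, hcs]

/-- Let `𝓐` be a von Neumann algebra equal to the strong-* liminf of a
net of von Neumann algebras `𝓐l`.  If a subnet of orthogonal projections `L_μ ∈ 𝓐_μ′`
(subnets encoded by a nontrivial filter `f ≤ atTop`) converges to `A` in the weak
operator topology, then `A` lies in the commutant `𝓐′` and `0 ≤ A ≤ I`. -/
theorem norms_of_vector_functionals_stmt7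
    {Λ : Type*} [Nonempty Λ] [Preorder Λ] [IsDirected Λ (· ≤ ·)]
    (𝓐l : Λ → VonNeumannAlgebra H) (𝓐 : VonNeumannAlgebra H)
    (hliminf : (𝓐 : Set (H →L[ℂ] H)) = sstarLiminf (fun l => (𝓐l l : Set (H →L[ℂ] H))))
    (T : Λ → H →L[ℂ] H) (f : Filter Λ) (hf : f.NeBot) (hle : f ≤ atTop)
    (hmem : ∀ᶠ l in f, IsOrthoProj (T l) ∧ T l ∈ Set.centralizer (𝓐l l : Set (H →L[ℂ] H)))
    (A : H →L[ℂ] H) (hconv : Tendsto T f (@nhds _ (WOT H) A)) :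
    A ∈ Set.centralizer (𝓐 : Set (H →L[ℂ] H)) ∧
      A.IsPositive ∧ (1 - A).IsPositive := by
  -- pointwise WOT convergence
  have hconv' : ∀ x y : H,
      Tendsto (fun l => (inner ℂ (T l x) y : ℂ)) f (nhds (inner ℂ (A x) y)) := by
    intro x y
    rw [WOT, nhds_induced, tendsto_comap_iff] at hconv
    have := (tendsto_pi_nhds.mp hconv) (x, y)
    simpa using this
  constructor
  · -- centralizer
    intro S hS
    have hS' : S ∈ sstarLiminf (fun l => (𝓐l l : Set (H →L[ℂ] H))) := by
      rw [← hliminf]; exact hS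
    obtain ⟨T', hT'mem, hT'x, hT'adj⟩ := hS'
    ext x
    refine ext_inner_right ℂ fun y => ?_
    -- goal : ⟪(S * A) x, y⟫ = ⟪(A * S) x, y⟫
    show (inner ℂ (S (A x)) y : ℂ) = inner ℂ (A (S x)) y
    have L1 : Tendsto (fun l => (inner ℂ (T l (S x)) y : ℂ)) f (nhds (inner ℂ (A (S x)) y)) :=
      hconv' (S x) y
    have L2 : Tendsto (fun l => (inner ℂ (T l x) (ContinuousLinearMap.adjoint S y) : ℂ)) f
        (nhds (inner ℂ (A x) (ContinuousLinearMap.adjoint S y))) :=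
      hconv' x _
    have key : (inner ℂ (A x) (ContinuousLinearMap.adjoint S y) : ℂ) = inner ℂ (S (A x)) y := by
      rw [ContinuousLinearMap.adjoint_inner_right]
    -- comparison
    have hd1 : Tendsto (fun l => ‖S x - T' l x‖) f (nhds 0) := by
      have := ((hT'x x).mono_left hle).sub_const (S x)
      have h2 := this.norm
      simp only [sub_self, norm_zero] at h2 ⊢
      simpa [norm_sub_rev] using h2
    have hd2 : Tendsto (fun l => ‖ContinuousLinearMap.adjoint (T' l) y
        - ContinuousLinearMap.adjoint S y‖) f (nhds 0) := by
      have := ((hT'adj y).mono_left hle).sub_const (ContinuousLinearMap.adjoint S y)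
      have h2 := this.norm
      simpa using h2
    have hc : Tendsto (fun l => ‖S x - T' l x‖ * ‖y‖
        + ‖x‖ * ‖ContinuousLinearMap.adjoint (T' l) y - ContinuousLinearMap.adjoint S y‖)
        f (nhds 0) := by
      have := (hd1.mul_const ‖y‖).add (hd2.const_mul ‖x‖)
      simpa using this
    have hb : ∀ᶠ l in f, ‖(inner ℂ (T l (S x)) y : ℂ)
        - inner ℂ (T l x) (ContinuousLinearMap.adjoint S y)‖
        ≤ ‖S x - T' l x‖ * ‖y‖
          + ‖x‖ * ‖ContinuousLinearMap.adjoint (T' l) y - ContinuousLinearMap.adjoint S y‖ := by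
      filter_upwards [hmem] with l hl
      obtain ⟨hproj, hcentral⟩ := hl
      have hcomm : T' l * T l = T l * T' l := hcentral (T' l) (hT'mem l)
      have hmid : (inner ℂ (T l (T' l x)) y : ℂ)
          = inner ℂ (T l x) (ContinuousLinearMap.adjoint (T' l) y) := by
        have h1 : T l (T' l x) = T' l (T l x) := by
          have := congrArg (fun S : H →L[ℂ] H => S x) hcomm
          simpa using this.symm
        rw [h1, ContinuousLinearMap.adjoint_inner_right]
      calc ‖(inner ℂ (T l (S x)) y : ℂ) - inner ℂ (T l x) (ContinuousLinearMap.adjoint S y)‖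
          = ‖((inner ℂ (T l (S x)) y : ℂ) - inner ℂ (T l (T' l x)) y)
            + ((inner ℂ (T l x) (ContinuousLinearMap.adjoint (T' l) y) : ℂ)
              - inner ℂ (T l x) (ContinuousLinearMap.adjoint S y))‖ := by
            rw [hmid]; ring_nf
        _ ≤ ‖(inner ℂ (T l (S x)) y : ℂ) - inner ℂ (T l (T' l x)) y‖
            + ‖(inner ℂ (T l x) (ContinuousLinearMap.adjoint (T' l) y) : ℂ)
              - inner ℂ (T l x) (ContinuousLinearMap.adjoint S y)‖ := norm_add_le _ _
        _ ≤ ‖S x - T' l x‖ * ‖y‖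
            + ‖x‖ * ‖ContinuousLinearMap.adjoint (T' l) y
              - ContinuousLinearMap.adjoint S y‖ := by
            gcongr
            · rw [← inner_sub_left, ← map_sub]
              calc ‖(inner ℂ (T l (S x - T' l x)) y : ℂ)‖
                  ≤ ‖T l (S x - T' l x)‖ * ‖y‖ := norm_inner_le_norm _ _
                _ ≤ ‖S x - T' l x‖ * ‖y‖ := by
                    gcongr; exact hproj.norm_apply_le _
            · rw [← inner_sub_right]
              calc ‖(inner ℂ (T l x) (ContinuousLinearMap.adjoint (T' l) y
                    - ContinuousLinearMap.adjoint S y) : ℂ)‖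
                  ≤ ‖T l x‖ * ‖ContinuousLinearMap.adjoint (T' l) y
                    - ContinuousLinearMap.adjoint S y‖ := norm_inner_le_norm _ _
                _ ≤ ‖x‖ * ‖ContinuousLinearMap.adjoint (T' l) y
                    - ContinuousLinearMap.adjoint S y‖ := by
                    gcongr; exact hproj.norm_apply_le _
    have L3 : Tendsto (fun l => (inner ℂ (T l (S x)) y : ℂ)) f
        (nhds (inner ℂ (A x) (ContinuousLinearMap.adjoint S y))) :=
      tendsto_of_close L2 hb hc
    have := tendsto_nhds_unique L3 L1
    rw [← key, this]
  · -- positivity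
    have hbox : ∀ x : H, (inner ℂ (A x) x : ℂ).im = 0 ∧ 0 ≤ (inner ℂ (A x) x : ℂ).re ∧
        (inner ℂ (A x) x : ℂ).re ≤ ‖x‖ ^ 2 := by
      intro x
      have hK : IsClosed {z : ℂ | z.im = 0 ∧ 0 ≤ z.re ∧ z.re ≤ ‖x‖ ^ 2} := by
        refine IsClosed.inter ?_ (IsClosed.inter ?_ ?_)
        · exact isClosed_eq Complex.continuous_im continuous_const
        · exact isClosed_le continuous_const Complex.continuous_re
        · exact isClosed_le Complex.continuous_re continuous_const
      have hmemK : ∀ᶠ l in f, (inner ℂ (T l x) x : ℂ) ∈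
          {z : ℂ | z.im = 0 ∧ 0 ≤ z.re ∧ z.re ≤ ‖x‖ ^ 2} := by
        filter_upwards [hmem] with l hl
        have h := hl.1.inner_self_eq x
        have hn := hl.1.norm_apply_le x
        rw [h]
        refine ⟨Complex.ofReal_im _, ?_, ?_⟩
        · rw [Complex.ofReal_re]; positivity
        · rw [Complex.ofReal_re]; exact pow_le_pow_left₀ (norm_nonneg _) hn 2
      exact hK.mem_of_tendsto (hconv' x x) hmemK
    constructor
    · rw [ContinuousLinearMap.isPositive_iff_complex]
      intro x
      obtain ⟨him, hre, _⟩ := hbox x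
      constructor
      · exact Complex.ext (by simp) (by simp [him])
      · exact hre
    · rw [ContinuousLinearMap.isPositive_iff_complex]
      intro x
      obtain ⟨him, _, hre2⟩ := hbox x
      have hval : (inner ℂ ((1 - A) x) x : ℂ) = (‖x‖ ^ 2 : ℝ) - inner ℂ (A x) x := by
        simp [inner_sub_left, inner_self_eq_norm_sq_to_K]
      constructor
      · rw [hval]
        rw [Complex.ext_iff]
        refine ⟨by simp, ?_⟩
        rw [Complex.ofReal_im, Complex.sub_im, Complex.ofReal_im, him]
        ring
      · rw [hval]
        simp only [RCLike.re_to_complex, Complex.sub_re, Complex.ofReal_re]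
        linarith
end
end

section
/- Let H₀ be a complex Hilbert space, B ∈ B(H₀) an invertible positive operator with 0 ≤ B ≤ I and ker(I−B) = {0}. Set a = √2/2, let S on H = H₀ ⊕ H₀ be S = [[B^{−1/2}, 0],[0, B^{1/2}]]·[[aI, −aI],[aI, aI]], and let 𝓑 = {C ⊕ D : C, D ∈ B(H₀)}. For x₁, x₂, y₁, y₂ ∈ H₀ put x = (x₁, x₂), y = (y₁, y₂), and define m₁ = a²‖B^{1/2}x₁+B^{−1/2}x₂‖² + a²‖B^{1/2}x₁−B^{−1/2}x₂‖², m₂ = a²‖B^{1/2}x₁+B^{−1/2}x₂‖² + a²‖B^{−1/2}y₁−B^{1/2}y₂‖², m₃ = a²‖B^{−1/2}y₁+B^{1/2}y₂‖² + a²‖B^{1/2}x₁−B^{−1/2}x₂‖², m₄ = a²‖B^{−1/2}y₁+B^{1/2}y₂‖² + a²‖B^{−1/2}y₁−B^{1/2}y₂‖². Then min{m₁, m₂, m₃, m₄} ≤ ‖ω_{S^{−1}x, S^{*}y}|_𝓑‖. -/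
set_option linter.unusedSectionVars false
set_option maxHeartbeats 1000000

noncomputable section

variable {H : Type*} [NormedAddCommGroup H] [InnerProductSpace ℂ H] [CompleteSpace H]

/-- `‖ω_{x,y}|_𝓐‖ = sup {|⟨Tx, y⟩| : T ∈ 𝓐, ‖T‖ ≤ 1}`. -/
def omegaNorm (𝓐 : Set (H →L[ℂ] H)) (x y : H) : ℝ :=
  sSup {r : ℝ | ∃ T ∈ 𝓐, ‖T‖ ≤ 1 ∧ r = ‖(inner ℂ (T x) y : ℂ)‖}

variable {H₀ : Type*} [NormedAddCommGroup H₀] [InnerProductSpace ℂ H₀] [CompleteSpace H₀]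

/-- The operator on `H₀ ⊕ H₀ = WithLp 2 (H₀ × H₀)` given by the block matrix
`[[A, B], [C, D]]`. -/
def blk (A B C D : H₀ →L[ℂ] H₀) : WithLp 2 (H₀ × H₀) →L[ℂ] WithLp 2 (H₀ × H₀) :=
  (((WithLp.prodContinuousLinearEquiv 2 ℂ H₀ H₀).symm :
      H₀ × H₀ →L[ℂ] WithLp 2 (H₀ × H₀)) ∘L ((A.coprod B).prod (C.coprod D))) ∘L
    ((WithLp.prodContinuousLinearEquiv 2 ℂ H₀ H₀) : WithLp 2 (H₀ × H₀) →L[ℂ] H₀ × H₀)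

/-- The vector `(u, v) ∈ H₀ ⊕ H₀`. -/
def vec₂ (u v : H₀) : WithLp 2 (H₀ × H₀) := (WithLp.equiv 2 (H₀ × H₀)).symm (u, v)

lemma blk_apply (A B C D : H₀ →L[ℂ] H₀) (u v : H₀) :
    blk A B C D (vec₂ u v) = vec₂ (A u + B v) (C u + D v) := rfl

lemma vec₂_eta (x : WithLp 2 (H₀ × H₀)) : vec₂ x.ofLp.1 x.ofLp.2 = x := rfl

lemma vec₂_congr {u v u' v' : H₀} (h1 : u = u') (h2 : v = v') : vec₂ u v = vec₂ u' v' := by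
  rw [h1, h2]

lemma blk_congr {A B C D A' B' C' D' : H₀ →L[ℂ] H₀} (h1 : A = A') (h2 : B = B')
    (h3 : C = C') (h4 : D = D') : blk A B C D = blk A' B' C' D' := by
  rw [h1, h2, h3, h4]

lemma blk_mul (A B C D A' B' C' D' : H₀ →L[ℂ] H₀) :
    blk A B C D * blk A' B' C' D' = blk (A*A'+B*C') (A*B'+B*D') (C*A'+D*C') (C*B'+D*D') := by
  ext x
  show blk A B C D (blk A' B' C' D' (vec₂ x.ofLp.1 x.ofLp.2)) = blk _ _ _ _ (vec₂ x.ofLp.1 x.ofLp.2)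
  simp only [blk_apply]
  apply vec₂_congr <;>
    simp only [map_add, ContinuousLinearMap.add_apply, ContinuousLinearMap.mul_apply] <;> abel

lemma blk_one : blk (1 : H₀ →L[ℂ] H₀) 0 0 1 = 1 := by
  ext x
  show blk (1 : H₀ →L[ℂ] H₀) 0 0 1 (vec₂ x.ofLp.1 x.ofLp.2) = x
  rw [blk_apply]
  show vec₂ _ _ = vec₂ x.ofLp.1 x.ofLp.2
  apply vec₂_congr <;> simp

lemma inner_vec₂ (u v u' v' : H₀) :
    (inner ℂ (vec₂ u v) (vec₂ u' v') : ℂ) = inner ℂ u u' + inner ℂ v v' :=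
  WithLp.prod_inner_apply _ _

lemma blk_adjoint (A B C D : H₀ →L[ℂ] H₀) :
    ContinuousLinearMap.adjoint (blk A B C D) =
      blk (ContinuousLinearMap.adjoint A) (ContinuousLinearMap.adjoint C)
        (ContinuousLinearMap.adjoint B) (ContinuousLinearMap.adjoint D) := by
  symm
  rw [ContinuousLinearMap.eq_adjoint_iff]
  intro x y
  rw [← vec₂_eta x, ← vec₂_eta y]
  simp only [blk_apply, inner_vec₂, inner_add_left, inner_add_right,
    ContinuousLinearMap.adjoint_inner_left]
  ring

lemma adjoint_real_smul (a : ℝ) (T : H₀ →L[ℂ] H₀) :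
    ContinuousLinearMap.adjoint (a • T) = a • ContinuousLinearMap.adjoint T := by
  symm
  rw [ContinuousLinearMap.eq_adjoint_iff]
  intro x y
  simp only [ContinuousLinearMap.smul_apply, RCLike.real_smul_eq_coe_smul (K := ℂ),
    inner_smul_left, inner_smul_right, ContinuousLinearMap.adjoint_inner_left,
    RCLike.conj_ofReal]

/-- the normalized rank-one operator `w ↦ (‖u‖‖v‖)⁻¹ ⟪u, w⟫ v`. -/
def rk1 (u v : H) : H →L[ℂ] H := ((‖u‖ * ‖v‖)⁻¹ : ℝ) • ((innerSL ℂ u).smulRight v)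

lemma rk1_norm_le (u v : H) : ‖rk1 u v‖ ≤ 1 := by
  rw [rk1, norm_smul, ContinuousLinearMap.norm_smulRight_apply, innerSL_apply_norm]
  rcases eq_or_lt_of_le (mul_nonneg (norm_nonneg u) (norm_nonneg v)) with h | h
  · rw [← h]; simp
  · rw [Real.norm_eq_abs, abs_of_pos (inv_pos.mpr h), inv_mul_cancel₀ h.ne']

lemma rk1_inner (u v : H) : (inner ℂ (rk1 u v u) v : ℂ) = ((‖u‖ * ‖v‖ : ℝ) : ℂ) := by
  rw [rk1]
  simp only [ContinuousLinearMap.smul_apply, ContinuousLinearMap.smulRight_apply,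
    innerSL_apply_apply]
  rcases eq_or_ne (‖u‖ * ‖v‖) 0 with h | h
  · rcases mul_eq_zero.mp h with h' | h' <;>
      simp [h, norm_eq_zero.mp h', inner_self_eq_norm_sq_to_K]
  · rw [RCLike.real_smul_eq_coe_smul (K := ℂ), inner_smul_left, inner_smul_left,
      inner_self_eq_norm_sq_to_K, RCLike.conj_ofReal, map_pow, RCLike.conj_ofReal,
      inner_self_eq_norm_sq_to_K]
    have hu : (‖u‖ : ℂ) ≠ 0 := by
      simpa using (mul_ne_zero_iff.mp h).1
    have hv : (‖v‖ : ℂ) ≠ 0 := by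
      simpa using (mul_ne_zero_iff.mp h).2
    push_cast
    field_simp
    rfl

lemma blk_diag_norm_le {C D : H₀ →L[ℂ] H₀} (hC : ‖C‖ ≤ 1) (hD : ‖D‖ ≤ 1) :
    ‖blk C 0 0 D‖ ≤ 1 := by
  apply ContinuousLinearMap.opNorm_le_bound _ zero_le_one
  intro z
  rw [one_mul, ← vec₂_eta z, blk_apply]
  have hsq : ∀ w : WithLp 2 (H₀ × H₀), ‖w‖ ^ 2 = ‖w.ofLp.1‖ ^ 2 + ‖w.ofLp.2‖ ^ 2 := fun w =>
    WithLp.prod_norm_sq_eq_of_L2 w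
  have h1 : ‖C z.ofLp.1‖ ≤ ‖z.ofLp.1‖ := by
    calc ‖C z.ofLp.1‖ ≤ ‖C‖ * ‖z.ofLp.1‖ := C.le_opNorm _
    _ ≤ 1 * ‖z.ofLp.1‖ := by gcongr
    _ = ‖z.ofLp.1‖ := one_mul _
  have h2 : ‖D z.ofLp.2‖ ≤ ‖z.ofLp.2‖ := by
    calc ‖D z.ofLp.2‖ ≤ ‖D‖ * ‖z.ofLp.2‖ := D.le_opNorm _
    _ ≤ 1 * ‖z.ofLp.2‖ := by gcongr
    _ = ‖z.ofLp.2‖ := one_mul _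
  have key : ‖vec₂ (C z.ofLp.1 + (0 : H₀ →L[ℂ] H₀) z.ofLp.2) ((0 : H₀ →L[ℂ] H₀) z.ofLp.1 + D z.ofLp.2)‖ ^ 2
      ≤ ‖vec₂ z.ofLp.1 z.ofLp.2‖ ^ 2 := by
    rw [hsq, hsq]
    show ‖C z.ofLp.1 + (0:H₀→L[ℂ]H₀) z.ofLp.2‖ ^ 2 + ‖(0:H₀→L[ℂ]H₀) z.ofLp.1 + D z.ofLp.2‖ ^ 2 ≤ _
    simp only [ContinuousLinearMap.zero_apply, add_zero, zero_add]
    show _ ≤ ‖z.ofLp.1‖ ^ 2 + ‖z.ofLp.2‖ ^ 2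
    nlinarith [norm_nonneg (C z.ofLp.1), norm_nonneg (D z.ofLp.2), norm_nonneg z.ofLp.1, norm_nonneg z.ofLp.2]
  have := Real.sqrt_le_sqrt key
  rwa [Real.sqrt_sq (norm_nonneg _), Real.sqrt_sq (norm_nonneg _)] at this

/-- With `B` an invertible positive contraction with `ker (I−B) = {0}`,
`R = B^{1/2}`, `Rinv = B^{−1/2}`, `a = √2/2`,
`S = [[B^{−1/2}, 0], [0, B^{1/2}]] · [[aI, −aI], [aI, aI]]` and `𝓑` the block-diagonal
algebra, one has `min {m₁, m₂, m₃, m₄} ≤ ‖ω_{S⁻¹x, S*y}|_𝓑‖`. -/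
theorem norms_of_vector_functionals_stmt15
    (B : H₀ →L[ℂ] H₀) (hBpos : B.IsPositive) (hB1 : ((1 : H₀ →L[ℂ] H₀) - B).IsPositive)
    (hBunit : IsUnit B) (hBker : LinearMap.ker (((1 : H₀ →L[ℂ] H₀) - B : H₀ →L[ℂ] H₀) : H₀ →ₗ[ℂ] H₀) = ⊥)
    (R Rinv : H₀ →L[ℂ] H₀) (hRpos : R.IsPositive) (hRsq : R * R = B)
    (hRRinv : R * Rinv = 1) (hRinvR : Rinv * R = 1)
    (x₁ x₂ y₁ y₂ : H₀) :
    let a : ℝ := Real.sqrt 2 / 2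
    let S : WithLp 2 (H₀ × H₀) →L[ℂ] WithLp 2 (H₀ × H₀) :=
      blk Rinv 0 0 R * blk (a • 1) (-(a • 1)) (a • 1) (a • 1)
    let m₁ := a ^ 2 * ‖R x₁ + Rinv x₂‖ ^ 2 + a ^ 2 * ‖R x₁ - Rinv x₂‖ ^ 2
    let m₂ := a ^ 2 * ‖R x₁ + Rinv x₂‖ ^ 2 + a ^ 2 * ‖Rinv y₁ - R y₂‖ ^ 2
    let m₃ := a ^ 2 * ‖Rinv y₁ + R y₂‖ ^ 2 + a ^ 2 * ‖R x₁ - Rinv x₂‖ ^ 2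
    let m₄ := a ^ 2 * ‖Rinv y₁ + R y₂‖ ^ 2 + a ^ 2 * ‖Rinv y₁ - R y₂‖ ^ 2
    min (min m₁ m₂) (min m₃ m₄) ≤
      omegaNorm {T : WithLp 2 (H₀ × H₀) →L[ℂ] WithLp 2 (H₀ × H₀) | ∃ C D, T = blk C 0 0 D}
        (Ring.inverse S (vec₂ x₁ x₂))
        (ContinuousLinearMap.adjoint S (vec₂ y₁ y₂)) := by
  intro a S m₁ m₂ m₃ m₄
  have ha0 : (0:ℝ) < a := by positivity
  have haa : a * a = 1/2 := by
    show Real.sqrt 2 / 2 * (Real.sqrt 2 / 2) = 1/2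
    rw [div_mul_div_comm, Real.mul_self_sqrt (by norm_num)]
    norm_num
  -- self-adjointness
  have hRadj : ContinuousLinearMap.adjoint R = R := hRpos.isSelfAdjoint
  have hRinvadj : ContinuousLinearMap.adjoint Rinv = Rinv := by
    have h1 : R * ContinuousLinearMap.adjoint Rinv = 1 := by
      have := congrArg star hRinvR
      rw [star_mul, star_one] at this
      rwa [ContinuousLinearMap.star_eq_adjoint, ContinuousLinearMap.star_eq_adjoint, hRadj]
        at this
    calc ContinuousLinearMap.adjoint Rinv = (Rinv * R) * ContinuousLinearMap.adjoint Rinv := by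
          rw [hRinvR, one_mul]
    _ = Rinv * (R * ContinuousLinearMap.adjoint Rinv) := by rw [mul_assoc]
    _ = Rinv := by rw [h1, mul_one]
  -- S as a single block matrix
  have hS : S = blk (a • Rinv) (-(a • Rinv)) (a • R) (a • R) := by
    show blk Rinv 0 0 R * blk (a • 1) (-(a • 1)) (a • 1) (a • 1) = _
    rw [blk_mul]
    apply blk_congr <;> simp [mul_smul_comm, mul_neg]
  -- the inverse of S
  set Sinv : WithLp 2 (H₀ × H₀) →L[ℂ] WithLp 2 (H₀ × H₀) :=
    blk (a • R) (a • Rinv) (-(a • R)) (a • Rinv) with hSinvdef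
  have hSSinv : S * Sinv = 1 := by
    rw [hS, hSinvdef, blk_mul, ← blk_one]
    have h1 : a * a + a * a = 1 := by rw [haa]; norm_num
    apply blk_congr <;>
      simp only [neg_mul, mul_neg, neg_neg, smul_mul_smul_comm, hRinvR, hRRinv] <;>
      first
        | (rw [← add_smul, h1, one_smul])
        | abel
  have hSinvS : Sinv * S = 1 := by
    rw [hS, hSinvdef, blk_mul, ← blk_one]
    have h1 : a * a + a * a = 1 := by rw [haa]; norm_num
    apply blk_congr <;>
      simp only [neg_mul, mul_neg, neg_neg, smul_mul_smul_comm, hRinvR, hRRinv] <;>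
      first
        | (rw [← add_smul, h1, one_smul])
        | abel
  have hRinginv : Ring.inverse S = Sinv :=
    Ring.inverse_unit ⟨S, Sinv, hSSinv, hSinvS⟩
  set u₁ := a • (R x₁ + Rinv x₂) with hu₁
  set u₂ := a • (Rinv x₂ - R x₁) with hu₂
  set v₁ := a • (Rinv y₁ + R y₂) with hv₁
  set v₂ := a • (R y₂ - Rinv y₁) with hv₂
  have hxvec : Ring.inverse S (vec₂ x₁ x₂) = vec₂ u₁ u₂ := by
    rw [hRinginv, hSinvdef, blk_apply]
    apply vec₂_congr
    · rw [hu₁, smul_add]; rfl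
    · rw [hu₂, smul_sub]
      simp only [ContinuousLinearMap.neg_apply, ContinuousLinearMap.smul_apply]
      abel
  have hadjneg : ∀ Q : H₀ →L[ℂ] H₀, ContinuousLinearMap.adjoint (-(a • Q)) =
      -(a • ContinuousLinearMap.adjoint Q) := fun Q => by
    rw [← neg_smul, adjoint_real_smul, neg_smul]
  have hSadj : ContinuousLinearMap.adjoint S = blk (a • Rinv) (a • R) (-(a • Rinv)) (a • R) := by
    rw [hS, blk_adjoint, hadjneg]
    simp only [adjoint_real_smul, hRadj, hRinvadj]
  have hyvec : ContinuousLinearMap.adjoint S (vec₂ y₁ y₂) = vec₂ v₁ v₂ := by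
    rw [hSadj, blk_apply]
    apply vec₂_congr
    · rw [hv₁, smul_add]; rfl
    · rw [hv₂, smul_sub]
      simp only [ContinuousLinearMap.neg_apply, ContinuousLinearMap.smul_apply]
      abel
  rw [hxvec, hyvec]
  set T : WithLp 2 (H₀ × H₀) →L[ℂ] WithLp 2 (H₀ × H₀) :=
    blk (rk1 u₁ v₁) 0 0 (rk1 u₂ v₂) with hT
  have hTnorm : ‖T‖ ≤ 1 := blk_diag_norm_le (rk1_norm_le _ _) (rk1_norm_le _ _)
  have hinner : (inner ℂ (T (vec₂ u₁ u₂)) (vec₂ v₁ v₂) : ℂ) =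
      ((‖u₁‖ * ‖v₁‖ + ‖u₂‖ * ‖v₂‖ : ℝ) : ℂ) := by
    rw [hT, blk_apply, inner_vec₂]
    simp only [ContinuousLinearMap.zero_apply, add_zero, zero_add]
    rw [rk1_inner, rk1_inner]
    push_cast
    ring
  have hbdd : BddAbove {r : ℝ | ∃ T' ∈ {T : WithLp 2 (H₀ × H₀) →L[ℂ] WithLp 2 (H₀ × H₀) |
      ∃ C D, T = blk C 0 0 D}, ‖T'‖ ≤ 1 ∧ r = ‖(inner ℂ (T' (vec₂ u₁ u₂)) (vec₂ v₁ v₂) : ℂ)‖} := by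
    refine ⟨‖vec₂ u₁ u₂‖ * ‖vec₂ v₁ v₂‖, ?_⟩
    rintro r' ⟨T', -, hn, rfl⟩
    calc ‖(inner ℂ (T' (vec₂ u₁ u₂)) (vec₂ v₁ v₂) : ℂ)‖
        ≤ ‖T' (vec₂ u₁ u₂)‖ * ‖vec₂ v₁ v₂‖ := norm_inner_le_norm _ _
      _ ≤ (‖T'‖ * ‖vec₂ u₁ u₂‖) * ‖vec₂ v₁ v₂‖ := by
          gcongr; exact T'.le_opNorm _
      _ ≤ (1 * ‖vec₂ u₁ u₂‖) * ‖vec₂ v₁ v₂‖ := by gcongr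
      _ = ‖vec₂ u₁ u₂‖ * ‖vec₂ v₁ v₂‖ := by ring
  have hle : ‖u₁‖ * ‖v₁‖ + ‖u₂‖ * ‖v₂‖ ≤
      omegaNorm {T : WithLp 2 (H₀ × H₀) →L[ℂ] WithLp 2 (H₀ × H₀) | ∃ C D, T = blk C 0 0 D}
        (vec₂ u₁ u₂) (vec₂ v₁ v₂) := by
    apply le_csSup hbdd
    refine ⟨T, ⟨_, _, rfl⟩, hTnorm, ?_⟩
    rw [hinner, Complex.norm_real, Real.norm_eq_abs, abs_of_nonneg (by positivity)]
  refine le_trans ?_ hle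
  have hn1 : ‖u₁‖ = a * ‖R x₁ + Rinv x₂‖ := by
    rw [hu₁, norm_smul, Real.norm_eq_abs, abs_of_pos ha0]
  have hn2 : ‖u₂‖ = a * ‖R x₁ - Rinv x₂‖ := by
    rw [hu₂, norm_smul, Real.norm_eq_abs, abs_of_pos ha0, norm_sub_rev]
  have hn3 : ‖v₁‖ = a * ‖Rinv y₁ + R y₂‖ := by
    rw [hv₁, norm_smul, Real.norm_eq_abs, abs_of_pos ha0]
  have hn4 : ‖v₂‖ = a * ‖Rinv y₁ - R y₂‖ := by
    rw [hv₂, norm_smul, Real.norm_eq_abs, abs_of_pos ha0, norm_sub_rev]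
  have e₁ : m₁ = ‖u₁‖ ^ 2 + ‖u₂‖ ^ 2 := by rw [hn1, hn2]; show _ = _; ring
  have e₂ : m₂ = ‖u₁‖ ^ 2 + ‖v₂‖ ^ 2 := by rw [hn1, hn4]; show _ = _; ring
  have e₃ : m₃ = ‖v₁‖ ^ 2 + ‖u₂‖ ^ 2 := by rw [hn3, hn2]; show _ = _; ring
  have e₄ : m₄ = ‖v₁‖ ^ 2 + ‖v₂‖ ^ 2 := by rw [hn3, hn4]; show _ = _; ring
  have nn1 := norm_nonneg u₁
  have nn2 := norm_nonneg u₂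
  have nn3 := norm_nonneg v₁
  have nn4 := norm_nonneg v₂
  rcases le_total ‖u₁‖ ‖v₁‖ with hc1 | hc1 <;> rcases le_total ‖u₂‖ ‖v₂‖ with hc2 | hc2
  · calc min (min m₁ m₂) (min m₃ m₄) ≤ m₁ := le_trans (min_le_left _ _) (min_le_left _ _)
      _ ≤ _ := by rw [e₁]; nlinarith
  · calc min (min m₁ m₂) (min m₃ m₄) ≤ m₂ := le_trans (min_le_left _ _) (min_le_right _ _)
      _ ≤ _ := by rw [e₂]; nlinarith
  · calc min (min m₁ m₂) (min m₃ m₄) ≤ m₃ := le_trans (min_le_right _ _) (min_le_left _ _)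
      _ ≤ _ := by rw [e₃]; nlinarith
  · calc min (min m₁ m₂) (min m₃ m₄) ≤ m₄ := le_trans (min_le_right _ _) (min_le_right _ _)
      _ ≤ _ := by rw [e₄]; nlinarith
end
end
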